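/- For n ≠ m, the adjoint representation ad: sl(n|m) → gDer(M(n|m)), E ↦ [E, ·]_g, restricted to the special linear Lie superalgebra sl(n|m), is a Lie superalgebra isomorphism onto the Lie superalgebra of all graded derivations of M(n|m). -/

import Mathlib

noncomputable section

/-- The `ℤ₂`-graded algebra `M(n|m)` of complex `(n+m)×(n+m)` matrices. -/
abbrev GMat (n m : ℕ) := Matrix (Fin (n + m)) (Fin (n + m)) ℂ

/-- The "body" matrix algebra `M_{max n m}(ℂ)`. -/
abbrev BMat (n m : ℕ) := Matrix (Fin (max n m)) (Fin (max n m)) ℂ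

namespace GMat

/-- Block degree of an index: `false` for the first (size `n`) block. -/
def bdeg (n m : ℕ) (i : Fin (n + m)) : Bool := decide (n ≤ i.val)

/-- `M` is homogeneous of degree `ε` (block-diagonal for `ε = false`,
block-off-diagonal for `ε = true`). -/
def IsHomog (n m : ℕ) (ε : Bool) (M : GMat n m) : Prop :=
  ∀ i j, Bool.xor (bdeg n m i) (bdeg n m j) ≠ ε → M i j = 0

/-- The Koszul sign `(-1)^{ab}`. -/
def sgn (a b : Bool) : ℂ := if a && b then -1 else 1

/-- Graded commutator of homogeneous elements of degrees `a`, `b`. -/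
def gcomm {n m : ℕ} (a b : Bool) (A B : GMat n m) : GMat n m := A * B - sgn a b • (B * A)

/-- Graded anticommutator of homogeneous elements of degrees `a`, `b`. -/
def gacomm {n m : ℕ} (a b : Bool) (A B : GMat n m) : GMat n m := A * B + sgn a b • (B * A)

/-- The grading matrix `Γ = diag(1_n, -1_m)`. -/
def Gamma (n m : ℕ) : GMat n m := Matrix.diagonal fun i => if bdeg n m i then -1 else 1

/-- `D` is a graded derivation of `M(n|m)` of degree `ε`. -/
def IsGDer (n m : ℕ) (ε : Bool) (D : GMat n m → GMat n m) : Prop :=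
  (∀ A B, D (A + B) = D A + D B) ∧
  (∀ (c : ℂ) A, D (c • A) = c • D A) ∧
  (∀ (a : Bool) M, IsHomog n m a M → IsHomog n m (Bool.xor a ε) (D M)) ∧
  (∀ (a : Bool) (M M' : GMat n m), IsHomog n m a M →
    D (M * M') = D M * M' + sgn ε a • (M * D M'))

/-- The graded adjoint action `ad E` of a homogeneous matrix `E` of degree `a`:
on homogeneous `M` it is the graded commutator `[E,M]_g`. -/
def gad (n m : ℕ) (a : Bool) (E : GMat n m) : GMat n m → GMat n m :=
  fun M => E * M - (if a then Gamma n m * M * Gamma n m * E else M * E)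

/-- The supertrace `str M = Tr M₁ - Tr M₄`. -/
def str (n m : ℕ) (M : GMat n m) : ℂ :=
  ∑ i, (if bdeg n m i then (-1 : ℂ) else 1) * M i i

end GMat




namespace AdProof

open GMat Matrix

variable {n m : ℕ}

lemma Gamma_sq : Gamma n m * Gamma n m = 1 := by
  ext i j
  rw [Gamma, Matrix.diagonal_mul_diagonal]
  by_cases h : i = j
  · subst h
    rw [Matrix.diagonal_apply_eq, Matrix.one_apply_eq]
    by_cases hb : bdeg n m i <;> simp [hb]
  · rw [Matrix.diagonal_apply_ne _ h, Matrix.one_apply_ne h]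

lemma Gamma_cancel (X : GMat n m) : Gamma n m * (Gamma n m * X) = X := by
  rw [← mul_assoc, Gamma_sq, one_mul]

lemma conj_homog {c : Bool} {M : GMat n m} (h : IsHomog n m c M) :
    Gamma n m * M * Gamma n m = sgn true c • M := by
  ext i j
  simp only [Gamma, Matrix.diagonal_mul, Matrix.mul_diagonal, Matrix.smul_apply, smul_eq_mul]
  by_cases hij : Bool.xor (bdeg n m i) (bdeg n m j) = c
  · cases hbi : bdeg n m i <;> cases hbj : bdeg n m j <;>
      simp_all [sgn]
  · rw [h i j hij]; ring

lemma homog_mul {a b : Bool} {A B : GMat n m} (hA : IsHomog n m a A) (hB : IsHomog n m b B) :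
    IsHomog n m (Bool.xor a b) (A * B) := by
  intro i j hij
  rw [Matrix.mul_apply]
  refine Finset.sum_eq_zero fun k _ => ?_
  by_cases h1 : Bool.xor (bdeg n m i) (bdeg n m k) = a
  · by_cases h2 : Bool.xor (bdeg n m k) (bdeg n m j) = b
    · exfalso; apply hij; rw [← h1, ← h2]
      cases bdeg n m i <;> cases bdeg n m k <;> cases bdeg n m j <;> rfl
    · rw [hB k j h2, mul_zero]
  · rw [hA i k h1, zero_mul]

lemma homog_add {a : Bool} {A B : GMat n m} (hA : IsHomog n m a A) (hB : IsHomog n m a B) :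
    IsHomog n m a (A + B) := fun i j h => by
  simp [Matrix.add_apply, hA i j h, hB i j h]

lemma homog_sub {a : Bool} {A B : GMat n m} (hA : IsHomog n m a A) (hB : IsHomog n m a B) :
    IsHomog n m a (A - B) := fun i j h => by
  simp [Matrix.sub_apply, hA i j h, hB i j h]

lemma homog_smul {a : Bool} (c : ℂ) {A : GMat n m} (hA : IsHomog n m a A) :
    IsHomog n m a (c • A) := fun i j h => by
  simp [Matrix.smul_apply, hA i j h]

lemma homog_zero (a : Bool) : IsHomog n m a (0 : GMat n m) := fun _ _ _ => rfl

lemma homog_one : IsHomog n m false (1 : GMat n m) := by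
  intro i j h
  rw [Matrix.one_apply_ne]
  rintro rfl; exact h (by simp)

lemma homog_Gamma : IsHomog n m false (Gamma n m) := by
  intro i j h
  rw [Gamma, Matrix.diagonal_apply_ne]
  rintro rfl; exact h (by simp)

lemma homog_both {c : Bool} {M : GMat n m} (h1 : IsHomog n m c M) (h2 : IsHomog n m (!c) M) :
    M = 0 := by
  ext i j
  by_cases h : Bool.xor (bdeg n m i) (bdeg n m j) = c
  · exact h2 i j (by rw [h]; cases c <;> simp)
  · exact h1 i j h

/-- homogeneous part of degree c -/
def epart (n m : ℕ) (c : Bool) (M : GMat n m) : GMat n m :=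
  Matrix.of fun i j => if Bool.xor (bdeg n m i) (bdeg n m j) = c then M i j else 0

lemma epart_homog (c : Bool) (M : GMat n m) : IsHomog n m c (epart n m c M) := by
  intro i j h; simp [epart, h]

lemma epart_add (M : GMat n m) : epart n m false M + epart n m true M = M := by
  ext i j
  simp only [Matrix.add_apply, epart, Matrix.of_apply]
  by_cases h : Bool.xor (bdeg n m i) (bdeg n m j) = false <;> simp_all




lemma homog_of_eq {c c' : Bool} {M : GMat n m} (h : IsHomog n m c M) (hc : c = c') :
    IsHomog n m c' M := hc ▸ h

lemma gad_addM (a : Bool) (E A B : GMat n m) :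
    gad n m a E (A + B) = gad n m a E A + gad n m a E B := by
  cases a <;> simp only [gad, if_true, if_false, Bool.false_eq_true] <;> noncomm_ring

lemma gad_smulM (a : Bool) (c : ℂ) (E A : GMat n m) :
    gad n m a E (c • A) = c • gad n m a E A := by
  cases a <;>
    simp only [gad, if_true, if_false, Bool.false_eq_true, mul_smul_comm, smul_mul_assoc,
      smul_sub]

lemma gad_homog {a b : Bool} {E M : GMat n m} (hE : IsHomog n m a E) (hM : IsHomog n m b M) :
    IsHomog n m (Bool.xor b a) (gad n m a E M) := by
  cases a
  · simp only [gad, if_false, Bool.false_eq_true]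
    exact homog_sub (homog_of_eq (homog_mul hE hM) (by cases b <;> rfl))
      (homog_of_eq (homog_mul hM hE) (by cases b <;> rfl))
  · simp only [gad, if_true]
    refine homog_sub (homog_of_eq (homog_mul hE hM) (by cases b <;> rfl)) ?_
    have h1 : IsHomog n m b (Gamma n m * M * Gamma n m) := by
      rw [conj_homog hM]; exact homog_smul _ hM
    exact homog_of_eq (homog_mul h1 hE) (by cases b <;> rfl)

lemma gad_leibniz {a b : Bool} {E : GMat n m} (hE : IsHomog n m a E) (M M' : GMat n m)
    (hM : IsHomog n m b M) :
    gad n m a E (M * M') = gad n m a E M * M' + sgn a b • (M * gad n m a E M') := by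
  cases a
  · simp only [gad, if_false, Bool.false_eq_true, sgn, Bool.false_and, if_false, one_smul]
    noncomm_ring
  · have hMc := conj_homog hM
    have key : Gamma n m * (M * M') * Gamma n m =
        (Gamma n m * M * Gamma n m) * (Gamma n m * M' * Gamma n m) := by
      have h := Gamma_sq (n := n) (m := m)
      calc Gamma n m * (M * M') * Gamma n m
          = Gamma n m * M * (Gamma n m * Gamma n m) * M' * Gamma n m := by
            rw [h]; noncomm_ring
        _ = _ := by noncomm_ring
    simp only [gad, if_true]
    rw [key, hMc]
    cases b <;>
      simp only [show sgn true false = 1 from rfl, show sgn true true = -1 from rfl,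
        one_smul, neg_smul, neg_neg] <;>
      noncomm_ring

lemma sgn_comm (a b : Bool) : sgn a b = sgn b a := by cases a <;> cases b <;> rfl

lemma part1 {a : Bool} {E : GMat n m} (hE : IsHomog n m a E) :
    IsGDer n m a (gad n m a E) := by
  refine ⟨gad_addM a E, fun c A => gad_smulM a c E A, ?_, ?_⟩
  · intro b M hM; exact gad_homog hE hM
  · intro b M M' hM; exact gad_leibniz hE M M' hM


lemma sum_signs : ∑ i : Fin (n + m), (if bdeg n m i then (-1 : ℂ) else 1) = (n : ℂ) - m := by
  rw [Fin.sum_univ_add (f := fun i : Fin (n + m) => if bdeg n m i then (-1 : ℂ) else 1)]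
  have h1 : ∀ i : Fin n, bdeg n m (Fin.castAdd m i) = false := by
    intro i; simp [bdeg, Fin.castAdd, Nat.not_le.mpr i.isLt]
  have h2 : ∀ i : Fin m, bdeg n m (Fin.natAdd n i) = true := by
    intro i; simp [bdeg, Fin.natAdd]
  simp only [h1, h2, if_true, if_false, Bool.false_eq_true]
  simp [Finset.sum_const]
  ring

lemma str_smul_one (c : ℂ) : str n m (c • (1 : GMat n m)) = c * ((n : ℂ) - m) := by
  rw [str]
  have : ∀ i : Fin (n + m), (c • (1 : GMat n m)) i i = c := by
    intro i; simp [Matrix.one_apply_eq]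
  simp only [this]
  rw [← Finset.sum_mul, sum_signs]
  ring

lemma part2 (hnm : n ≠ m) {a : Bool} {E : GMat n m} (hstr : str n m E = 0)
    (hE : IsHomog n m a E) (hg : gad n m a E = fun _ => 0) : E = 0 := by
  have hpos : 0 < n + m := by
    rcases Nat.eq_zero_or_pos (n + m) with h | h
    · exfalso; exact hnm (by omega)
    · exact h
  cases a
  · -- even case: E commutes with everything
    have hc : ∀ M : GMat n m, E * M = M * E := by
      intro M
      have h := congrFun hg M
      simp only [gad, if_false, Bool.false_eq_true] at h
      exact sub_eq_zero.mp h
    -- off-diagonal entries vanish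
    have hoff : ∀ i k : Fin (n + m), i ≠ k → E i k = 0 := by
      intro i k hik
      have h := congrFun (congrFun (hc (Matrix.single k k 1)) i) k
      rw [Matrix.mul_single_apply_same,
        Matrix.single_mul_apply_of_ne 1 k k i k hik E] at h
      simpa using h
    -- diagonal entries are equal
    have hdiag : ∀ k l : Fin (n + m), E k k = E l l := by
      intro k l
      have h := congrFun (congrFun (hc (Matrix.single k l 1)) k) l
      rw [Matrix.mul_single_apply_same,
        Matrix.single_mul_apply_same 1 k l l E] at h
      simpa using h
    set z : Fin (n + m) := ⟨0, hpos⟩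
    have hEeq : E = E z z • (1 : GMat n m) := by
      ext i j
      by_cases hij : i = j
      · subst hij; simp [Matrix.one_apply_eq, hdiag i z]
      · simp [Matrix.one_apply_ne hij, hoff i j hij]
    have : str n m E = E z z * ((n : ℂ) - m) := by
      nth_rewrite 1 [hEeq]
      rw [str_smul_one]
    rw [hstr] at this
    have hnm' : (n : ℂ) - m ≠ 0 := fun h => hnm (Nat.cast_injective (sub_eq_zero.mp h))
    have hz : E z z = 0 := by
      rcases mul_eq_zero.mp this.symm with h | h
      · exact h
      · exact absurd h hnm'
    rw [hEeq, hz, zero_smul]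
  · -- odd case
    have hconj := conj_homog hE
    rw [show sgn true true = -1 from rfl, neg_smul, one_smul] at hconj
    have h := congrFun hg (Gamma n m)
    simp only [gad, if_true] at h
    rw [show Gamma n m * Gamma n m * Gamma n m * E = Gamma n m * E by
      rw [Gamma_sq, one_mul]] at h
    have h1 : E * Gamma n m = Gamma n m * E := sub_eq_zero.mp h
    have h2 : Gamma n m * E = -(E * Gamma n m) := by
      calc Gamma n m * E = Gamma n m * E * (Gamma n m * Gamma n m) := by
            rw [Gamma_sq, mul_one]
        _ = (Gamma n m * E * Gamma n m) * Gamma n m := by noncomm_ring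
        _ = -(E * Gamma n m) := by rw [hconj]; noncomm_ring
    have h3 : E * Gamma n m = 0 := by
      have h5 : E * Gamma n m + E * Gamma n m = 0 := by
        nth_rewrite 2 [h1.trans h2]
        exact add_neg_cancel _
      have h6 : (2 : ℂ) • (E * Gamma n m) = 0 := by rw [two_smul]; exact h5
      rcases smul_eq_zero.mp h6 with h | h
      · exact absurd h two_ne_zero
      · exact h
    calc E = E * (Gamma n m * Gamma n m) := by rw [Gamma_sq, mul_one]
      _ = (E * Gamma n m) * Gamma n m := by noncomm_ring
      _ = 0 := by rw [h3, zero_mul]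

lemma inner_of_der (hpos : 0 < n + m) (D : GMat n m → GMat n m)
    (hadd : ∀ A B, D (A + B) = D A + D B)
    (hsmul : ∀ (c : ℂ) A, D (c • A) = c • D A)
    (hleib : ∀ A B, D (A * B) = D A * B + A * D B) :
    ∃ F : GMat n m, ∀ M, D M = F * M - M * F := by
  set z : Fin (n + m) := ⟨0, hpos⟩ with hz
  set e : Fin (n + m) → Fin (n + m) → GMat n m :=
    fun i j => Matrix.single i j 1 with he
  have hsplit : ∀ i j l : Fin (n + m), e i j * e j l = e i l := by
    intro i j l
    rw [he]; simp only
    rw [Matrix.single_mul_single_same, one_mul]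
  have hne : ∀ (i j k l : Fin (n + m)), j ≠ k → e i j * e k l = 0 := by
    intro i j k l h
    rw [he]; simp only
    exact Matrix.single_mul_single_of_ne 1 i j k h 1
  have hone : (∑ k, e k k) = (1 : GMat n m) := by
    ext i j
    rw [Matrix.sum_apply]
    by_cases hij : i = j
    · subst hij
      rw [Matrix.one_apply_eq, Finset.sum_eq_single i]
      · simp [he, Matrix.single]
      · intro k _ hk
        simp [he, Matrix.single, hk]
      · simp
    · rw [Matrix.one_apply_ne hij]
      refine Finset.sum_eq_zero fun k _ => ?_
      simp only [he, Matrix.single, Matrix.of_apply]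
      rw [if_neg]
      rintro ⟨rfl, rfl⟩
      exact hij rfl
  set F : GMat n m := ∑ k, D (e k z) * e z k with hF
  -- e00 * D e00 * e00 = 0
  have hzz : e z z * e z z = e z z := hsplit z z z
  have hD00 := hleib (e z z) (e z z)
  rw [hzz] at hD00
  have h00 : e z z * D (e z z) * e z z = 0 := by
    have h2 : e z z * D (e z z) * e z z + e z z * D (e z z) * e z z
        = e z z * D (e z z) * e z z := by
      conv_rhs => rw [hD00]
      rw [mul_add, add_mul]
      congr 1
      · calc e z z * D (e z z) * e z z
            = e z z * D (e z z) * (e z z * e z z) := by rw [hzz]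
          _ = e z z * (D (e z z) * e z z) * e z z := by noncomm_ring
      · calc e z z * D (e z z) * e z z
            = (e z z * e z z) * D (e z z) * e z z := by rw [hzz]
          _ = e z z * (e z z * D (e z z)) * e z z := by noncomm_ring
    exact add_eq_right.mp h2
  have hD0 : D 0 = 0 := by
    have := hsmul 0 0
    simpa using this
  -- F * e i j = D (e i z) * e z j
  have hFe : ∀ i j, F * e i j = D (e i z) * e z j := by
    intro i j
    rw [hF, Finset.sum_mul]
    rw [Finset.sum_eq_single i]
    · rw [mul_assoc, hsplit]
    · intro k _ hk
      rw [mul_assoc, hne z k i j hk, mul_zero]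
    · simp
  -- e z j * D (e k z) = (if j = k then D (e z z) else 0) - D (e z j) * e k z
  have hzkD : ∀ j k : Fin (n + m),
      e z j * D (e k z) = (if j = k then D (e z z) else 0) - D (e z j) * e k z := by
    intro j k
    have h := hleib (e z j) (e k z)
    by_cases hjk : j = k
    · subst hjk
      rw [hsplit] at h
      rw [if_pos rfl]
      rw [h]; abel
    · rw [hne z j k z hjk, hD0] at h
      rw [if_neg hjk, zero_sub]
      have h' : D (e z j) * e k z + e z j * D (e k z) = 0 := h.symm
      calc e z j * D (e k z)
          = (D (e z j) * e k z + e z j * D (e k z)) - D (e z j) * e k z := by abel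
        _ = -(D (e z j) * e k z) := by rw [h']; abel
  -- e i j * F = - (e i z * D (e z j))
  have heF : ∀ i j, e i j * F = e i z * (D (e z z) * e z j) - e i z * D (e z j) := by
    intro i j
    rw [hF, Finset.mul_sum]
    have hterm : ∀ k, e i j * (D (e k z) * e z k)
        = (if j = k then e i z * (D (e z z) * e z k) else 0)
          - e i z * (D (e z j) * e k z * e z k) := by
      intro k
      have h1 : e i j * (D (e k z) * e z k) = e i z * ((e z j * D (e k z)) * e z k) := by
        rw [← hsplit i z j]; noncomm_ring
      rw [h1, hzkD j k]
      by_cases hjk : j = k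
      · subst hjk
        rw [if_pos rfl, if_pos rfl]
        noncomm_ring
      · rw [if_neg hjk, if_neg hjk]
        noncomm_ring
    rw [Finset.sum_congr rfl fun k _ => hterm k]
    rw [Finset.sum_sub_distrib]
    congr 1
    · rw [Finset.sum_ite_eq Finset.univ j (fun k => e i z * (D (e z z) * e z k))]
      simp
    · have : ∀ k : Fin (n + m), e i z * (D (e z j) * e k z * e z k)
          = e i z * (D (e z j) * e k k) := by
        intro k; rw [mul_assoc (D (e z j)), hsplit]
      rw [Finset.sum_congr rfl fun k _ => this k]
      rw [← Finset.mul_sum, ← Finset.mul_sum, hone, mul_one]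
  -- the middle term vanishes
  have hmid : ∀ i j, e i z * (D (e z z) * e z j) = 0 := by
    intro i j
    have h1 : e i z * e z z = e i z := hsplit i z z
    have h2 : e z z * e z j = e z j := hsplit z z j
    calc e i z * (D (e z z) * e z j)
        = (e i z * e z z) * D (e z z) * (e z z * e z j) := by rw [h1, h2]; noncomm_ring
      _ = e i z * (e z z * D (e z z) * e z z) * e z j := by noncomm_ring
      _ = 0 := by rw [h00, mul_zero, zero_mul]
  -- D on basis matrices
  have hbasis : ∀ i j, D (e i j) = F * e i j - e i j * F := by
    intro i j
    rw [hFe i j, heF i j, hmid i j]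
    have h := hleib (e i z) (e z j)
    rw [hsplit] at h
    rw [h]; abel
  -- linear extension
  refine ⟨F, fun M => ?_⟩
  have hDsum : D M = ∑ i, ∑ j, M i j • D (e i j) := by
    have hM : M = ∑ i, ∑ j, M i j • e i j := by
      conv_lhs => rw [Matrix.matrix_eq_sum_single M]
      refine Finset.sum_congr rfl fun i _ => Finset.sum_congr rfl fun j _ => ?_
      rw [he]; simp
    have hDadd : ∀ (s : Finset (Fin (n + m))) (f : Fin (n + m) → GMat n m),
        D (∑ i ∈ s, f i) = ∑ i ∈ s, D (f i) := by
      intro s f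
      induction s using Finset.induction_on with
      | empty => simpa using hD0
      | insert _ _ hx ih => rw [Finset.sum_insert hx, hadd, ih, Finset.sum_insert hx]
    conv_lhs => rw [hM]
    rw [hDadd]
    refine Finset.sum_congr rfl fun i _ => ?_
    rw [hDadd]
    refine Finset.sum_congr rfl fun j _ => ?_
    rw [hsmul]
  rw [hDsum]
  have hM : M = ∑ i, ∑ j, M i j • e i j := by
    conv_lhs => rw [Matrix.matrix_eq_sum_single M]
    refine Finset.sum_congr rfl fun i _ => Finset.sum_congr rfl fun j _ => ?_
    rw [he]; simp
  calc ∑ i, ∑ j, M i j • D (e i j)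
      = ∑ i, ∑ j, (F * (M i j • e i j) - (M i j • e i j) * F) := by
        refine Finset.sum_congr rfl fun i _ => Finset.sum_congr rfl fun j _ => ?_
        rw [hbasis i j, smul_sub, mul_smul_comm, smul_mul_assoc]
    _ = F * (∑ i, ∑ j, M i j • e i j) - (∑ i, ∑ j, M i j • e i j) * F := by
        simp only [Finset.sum_sub_distrib, Finset.mul_sum, Finset.sum_mul]
    _ = F * M - M * F := by rw [← hM]

lemma gad_addE (a : Bool) (E E' M : GMat n m) :
    gad n m a (E + E') M = gad n m a E M + gad n m a E' M := by
  cases a <;> simp only [gad, if_true, if_false, Bool.false_eq_true] <;> noncomm_ring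

lemma gad_subE (a : Bool) (E E' M : GMat n m) :
    gad n m a (E - E') M = gad n m a E M - gad n m a E' M := by
  cases a <;> simp only [gad, if_true, if_false, Bool.false_eq_true] <;> noncomm_ring

lemma str_homog_true {X : GMat n m} (hX : IsHomog n m true X) : str n m X = 0 := by
  rw [str]
  refine Finset.sum_eq_zero fun i _ => ?_
  rw [hX i i (by simp), mul_zero]

lemma str_sub (A B : GMat n m) : str n m (A - B) = str n m A - str n m B := by
  simp only [str, Matrix.sub_apply, mul_sub, Finset.sum_sub_distrib]

lemma gad_smul_one (c : ℂ) (M : GMat n m) : gad n m false (c • 1) M = 0 := by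
  simp only [gad, if_false, Bool.false_eq_true, smul_mul_assoc, mul_smul_comm, one_mul, mul_one]
  exact sub_self _

lemma part3 (hnm : n ≠ m) {a : Bool} {D : GMat n m → GMat n m} (hD : IsGDer n m a D) :
    ∃ E : GMat n m, str n m E = 0 ∧ IsHomog n m a E ∧ D = gad n m a E := by
  have hpos : 0 < n + m := by omega
  obtain ⟨hadd, hsmul, hhom, hleib⟩ := hD
  have hnm' : (n : ℂ) - m ≠ 0 := fun h => hnm (Nat.cast_injective (sub_eq_zero.mp h))
  cases a
  · -- even case
    have hleib' : ∀ A B, D (A * B) = D A * B + A * D B := by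
      intro A B
      have h0 := hleib false (epart n m false A) B (epart_homog false A)
      have h1 := hleib true (epart n m true A) B (epart_homog true A)
      rw [show sgn false false = 1 from rfl, one_smul] at h0
      rw [show sgn false true = 1 from rfl, one_smul] at h1
      calc D (A * B) = D ((epart n m false A + epart n m true A) * B) := by rw [epart_add]
        _ = D (epart n m false A * B) + D (epart n m true A * B) := by rw [add_mul, hadd]
        _ = (D (epart n m false A) + D (epart n m true A)) * B
            + (epart n m false A + epart n m true A) * D B := by rw [h0, h1]; noncomm_ring
        _ = D A * B + A * D B := by rw [← hadd, epart_add]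
    obtain ⟨F, hF⟩ := inner_of_der hpos D hadd hsmul hleib'
    have hFsplit : epart n m false F + epart n m true F = F := epart_add F
    have hD_eq : ∀ M, D M = gad n m false F M := by
      intro M; rw [hF M]; simp only [gad, if_false, Bool.false_eq_true]
    have h1hom : ∀ (b : Bool) (M : GMat n m), IsHomog n m b M →
        gad n m false (epart n m true F) M = 0 := by
      intro b M hM
      have hb : IsHomog n m b (gad n m false (epart n m true F) M) := by
        have hgoal : gad n m false (epart n m true F) M
            = D M - gad n m false (epart n m false F) M := by
          have hsum := gad_addE false (epart n m false F) (epart n m true F) M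
          rw [hFsplit] at hsum
          rw [hD_eq M, hsum]; abel
        rw [hgoal]
        refine homog_sub (homog_of_eq (hhom b M hM) (by cases b <;> rfl))
          (homog_of_eq (gad_homog (epart_homog false F) hM) (by cases b <;> rfl))
      have hb' : IsHomog n m (!b) (gad n m false (epart n m true F) M) := by
        simp only [gad, if_false, Bool.false_eq_true]
        exact homog_sub
          (homog_of_eq (homog_mul (epart_homog true F) hM) (by cases b <;> rfl))
          (homog_of_eq (homog_mul hM (epart_homog true F)) (by cases b <;> rfl))
      exact homog_both hb hb'
    have h1zero : ∀ M, gad n m false (epart n m true F) M = 0 := by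
      intro M
      calc gad n m false (epart n m true F) M
          = gad n m false (epart n m true F) (epart n m false M + epart n m true M) := by
            rw [epart_add]
        _ = 0 := by
            rw [gad_addM, h1hom false _ (epart_homog false M),
              h1hom true _ (epart_homog true M), add_zero]
    have hDF0 : ∀ M, D M = gad n m false (epart n m false F) M := by
      intro M
      have h := gad_addE false (epart n m false F) (epart n m true F) M
      rw [hFsplit] at h
      rw [hD_eq M, h, h1zero M, add_zero]
    refine ⟨epart n m false F - (str n m (epart n m false F) / ((n : ℂ) - m)) • 1, ?_, ?_, ?_⟩
    · rw [str_sub, str_smul_one, div_mul_cancel₀ _ hnm', sub_self]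
    · exact homog_sub (epart_homog false F) (homog_smul _ homog_one)
    · funext M
      rw [gad_subE, gad_smul_one, sub_zero, hDF0 M]
  · -- odd case
    have hadd' : ∀ A B, Gamma n m * D (A + B) = Gamma n m * D A + Gamma n m * D B := by
      intro A B; rw [hadd, mul_add]
    have hsmul' : ∀ (c : ℂ) (A : GMat n m), Gamma n m * D (c • A) = c • (Gamma n m * D A) := by
      intro c A; rw [hsmul, mul_smul_comm]
    have hleibH : ∀ (b : Bool) (M M' : GMat n m), IsHomog n m b M →
        Gamma n m * D (M * M') = (Gamma n m * D M) * M' + M * (Gamma n m * D M') := by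
      intro b M M' hM
      have h := hleib b M M' hM
      have hGM : Gamma n m * M = sgn true b • (M * Gamma n m) := by
        calc Gamma n m * M = (Gamma n m * M * Gamma n m) * Gamma n m := by
              rw [mul_assoc, Gamma_sq, mul_one]
          _ = sgn true b • (M * Gamma n m) := by rw [conj_homog hM, smul_mul_assoc]
      have hs2 : sgn true b * sgn true b = 1 := by cases b <;> norm_num [sgn]
      calc Gamma n m * D (M * M')
          = Gamma n m * (D M * M' + sgn true b • (M * D M')) := by rw [h]
        _ = (Gamma n m * D M) * M' + sgn true b • (Gamma n m * M * D M') := by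
            rw [mul_add, mul_smul_comm, ← mul_assoc, ← mul_assoc]
        _ = (Gamma n m * D M) * M' + M * (Gamma n m * D M') := by
            rw [hGM, smul_mul_assoc, smul_smul, hs2, one_smul, mul_assoc M (Gamma n m) (D M')]
    have hleibfull : ∀ A B, Gamma n m * D (A * B)
        = (Gamma n m * D A) * B + A * (Gamma n m * D B) := by
      intro A B
      have h0 := hleibH false (epart n m false A) B (epart_homog false A)
      have h1 := hleibH true (epart n m true A) B (epart_homog true A)
      calc Gamma n m * D (A * B)
          = Gamma n m * D ((epart n m false A + epart n m true A) * B) := by rw [epart_add]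
        _ = Gamma n m * D (epart n m false A * B) + Gamma n m * D (epart n m true A * B) := by
            rw [add_mul, hadd, mul_add]
        _ = (Gamma n m * D (epart n m false A) + Gamma n m * D (epart n m true A)) * B
            + (epart n m false A + epart n m true A) * (Gamma n m * D B) := by
            rw [h0, h1]; noncomm_ring
        _ = (Gamma n m * D A) * B + A * (Gamma n m * D B) := by
            rw [← mul_add, ← hadd, epart_add]
    obtain ⟨F, hF⟩ := inner_of_der hpos (fun M => Gamma n m * D M) hadd' hsmul' hleibfull
    have hDM : ∀ M, D M = gad n m true (Gamma n m * F) M := by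
      intro M
      have h2 : Gamma n m * M * Gamma n m * (Gamma n m * F) = Gamma n m * (M * F) := by
        calc Gamma n m * M * Gamma n m * (Gamma n m * F)
            = Gamma n m * M * ((Gamma n m * Gamma n m) * F) := by noncomm_ring
          _ = Gamma n m * (M * F) := by rw [Gamma_sq, one_mul, mul_assoc]
      calc D M = Gamma n m * (Gamma n m * D M) := (Gamma_cancel _).symm
        _ = Gamma n m * (F * M - M * F) := by rw [hF M]
        _ = (Gamma n m * F) * M - Gamma n m * (M * F) := by rw [mul_sub, mul_assoc]
        _ = gad n m true (Gamma n m * F) M := by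
            simp only [gad, if_true]
            rw [h2]
    have hsplit : epart n m false (Gamma n m * F) + epart n m true (Gamma n m * F)
        = Gamma n m * F := epart_add _
    have h0hom : ∀ (b : Bool) (M : GMat n m), IsHomog n m b M →
        gad n m true (epart n m false (Gamma n m * F)) M = 0 := by
      intro b M hM
      have hb : IsHomog n m b (gad n m true (epart n m false (Gamma n m * F)) M) := by
        simp only [gad, if_true]
        have hconjM : IsHomog n m b (Gamma n m * M * Gamma n m) := by
          rw [conj_homog hM]; exact homog_smul _ hM
        exact homog_sub
          (homog_of_eq (homog_mul (epart_homog false _) hM) (by cases b <;> rfl))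
          (homog_of_eq (homog_mul hconjM (epart_homog false _)) (by cases b <;> rfl))
      have hb' : IsHomog n m (!b) (gad n m true (epart n m false (Gamma n m * F)) M) := by
        have hgoal : gad n m true (epart n m false (Gamma n m * F)) M
            = D M - gad n m true (epart n m true (Gamma n m * F)) M := by
          have hsum := gad_addE true (epart n m false (Gamma n m * F))
            (epart n m true (Gamma n m * F)) M
          rw [hsplit] at hsum
          rw [hDM M, hsum]; abel
        rw [hgoal]
        refine homog_sub (homog_of_eq (hhom b M hM) (by cases b <;> rfl))
          (homog_of_eq (gad_homog (epart_homog true _) hM) (by cases b <;> rfl))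
      exact homog_both hb hb'
    have h0zero : ∀ M, gad n m true (epart n m false (Gamma n m * F)) M = 0 := by
      intro M
      calc gad n m true (epart n m false (Gamma n m * F)) M
          = gad n m true (epart n m false (Gamma n m * F))
              (epart n m false M + epart n m true M) := by rw [epart_add]
        _ = 0 := by
            rw [gad_addM, h0hom false _ (epart_homog false M),
              h0hom true _ (epart_homog true M), add_zero]
    refine ⟨epart n m true (Gamma n m * F), str_homog_true (epart_homog true _),
      epart_homog true _, funext fun M => ?_⟩
    have h := gad_addE true (epart n m false (Gamma n m * F)) (epart n m true (Gamma n m * F)) M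
    rw [hsplit] at h
    rw [hDM M, h, h0zero M, zero_add]

lemma hcomm_rule {d : Bool} {Y : GMat n m} (hY : IsHomog n m d Y) :
    Gamma n m * Y = sgn true d • (Y * Gamma n m) := by
  calc Gamma n m * Y = (Gamma n m * Y * Gamma n m) * Gamma n m := by
        rw [mul_assoc, Gamma_sq, mul_one]
    _ = sgn true d • (Y * Gamma n m) := by rw [conj_homog hY, smul_mul_assoc]

lemma hcomm_rule' {d : Bool} {Y : GMat n m} (hY : IsHomog n m d Y) (X : GMat n m) :
    Gamma n m * (Y * X) = sgn true d • (Y * (Gamma n m * X)) := by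
  calc Gamma n m * (Y * X) = (Gamma n m * Y) * X := by rw [mul_assoc]
    _ = sgn true d • (Y * (Gamma n m * X)) := by
        rw [hcomm_rule hY, smul_mul_assoc, mul_assoc]

lemma part4 {a b : Bool} {E F : GMat n m}
    (hE : IsHomog n m a E) (hF : IsHomog n m b F) (M : GMat n m) :
    gad n m (Bool.xor a b) (gcomm a b E F) M =
      gad n m a E (gad n m b F M) - sgn a b • gad n m b F (gad n m a E M) := by
  have hGG : ∀ X : GMat n m, Gamma n m * (Gamma n m * X) = X := Gamma_cancel
  have hGE := hcomm_rule' hE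
  have hGF := hcomm_rule' hF
  have hGE2 := hcomm_rule hE
  have hGF2 := hcomm_rule hF
  cases a <;> cases b
  · -- false false
    simp only [gad, gcomm, Bool.xor_false, if_true, if_false, Bool.false_eq_true,
      show sgn false false = (1 : ℂ) from rfl, one_smul]
    noncomm_ring
  · -- false true
    simp only [show sgn true false = (1 : ℂ) from rfl, one_smul] at hGE hGE2
    simp only [gad, gcomm, Bool.false_xor, if_true, if_false, Bool.false_eq_true,
      show sgn false true = (1 : ℂ) from rfl, one_smul]
    simp only [mul_sub, sub_mul, mul_assoc]
    simp only [hGE, hGG, hGE2, Gamma_sq, mul_one, one_mul]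
    noncomm_ring
  · -- true false
    simp only [show sgn true true = (-1 : ℂ) from rfl, neg_smul, one_smul] at hGE hGE2
    simp only [show sgn true false = (1 : ℂ) from rfl, one_smul] at hGF hGF2
    simp only [gad, gcomm, Bool.xor_false, if_true, if_false, Bool.false_eq_true,
      show sgn true false = (1 : ℂ) from rfl, one_smul]
    simp only [mul_sub, sub_mul, mul_assoc]
    simp only [hGE, hGF, hGG, hGE2, hGF2, Gamma_sq, mul_one, one_mul, mul_neg, neg_mul, neg_neg, neg_sub]
    noncomm_ring
  · -- true true
    simp only [show sgn true true = (-1 : ℂ) from rfl, neg_smul, one_smul] at hGE hGE2 hGF hGF2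
    simp only [gad, gcomm, Bool.xor_true, Bool.not_true, if_true, if_false, Bool.false_eq_true,
      show sgn true true = (-1 : ℂ) from rfl, neg_smul, one_smul, sub_neg_eq_add]
    simp only [mul_sub, sub_mul, mul_add, add_mul, mul_assoc]
    simp only [hGE, hGF, hGG, hGE2, hGF2, Gamma_sq, mul_one, one_mul, mul_neg, neg_mul, neg_neg, neg_sub]
    noncomm_ring

end AdProof

/-- For `n ≠ m`, `ad : sl(n|m) → gDer(M(n|m))` is a Lie superalgebra isomorphism:
each `ad E` is a graded derivation, the assignment is injective on homogeneous
supertrace-free matrices, every graded derivation arises this way, and graded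
brackets are preserved. -/
theorem ad_sl_iso_gder (n m : ℕ) (hnm : n ≠ m) :
    (∀ (a : Bool) (E : GMat n m), GMat.str n m E = 0 → GMat.IsHomog n m a E →
      GMat.IsGDer n m a (GMat.gad n m a E)) ∧
    (∀ (a : Bool) (E : GMat n m), GMat.str n m E = 0 → GMat.IsHomog n m a E →
      GMat.gad n m a E = (fun _ => 0) → E = 0) ∧
    (∀ (a : Bool) (D : GMat n m → GMat n m), GMat.IsGDer n m a D →
      ∃ E : GMat n m, GMat.str n m E = 0 ∧ GMat.IsHomog n m a E ∧
        D = GMat.gad n m a E) ∧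
    (∀ (a b : Bool) (E F : GMat n m), GMat.str n m E = 0 → GMat.str n m F = 0 →
      GMat.IsHomog n m a E → GMat.IsHomog n m b F →
      ∀ M, GMat.gad n m (Bool.xor a b) (GMat.gcomm a b E F) M =
        GMat.gad n m a E (GMat.gad n m b F M) -
          GMat.sgn a b • GMat.gad n m b F (GMat.gad n m a E M)) := by
  refine ⟨?_, ?_, ?_, ?_⟩
  · intro a E _ hE
    exact AdProof.part1 hE
  · intro a E hstr hE hg
    exact AdProof.part2 hnm hstr hE hg
  · intro a D hD
    exact AdProof.part3 hnm hD
  · intro a b E F _ _ hE hF M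
    exact AdProof.part4 hE hF M

end
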